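/- Let f be Vigoda's flip probabilities (f_1=1, f_2=13/42, f_3=1/6, f_4=2/21, f_5=1/21, f_6=1/84, f_j=0 for j≥7). For all integers a, b ≥ 1 with a ≤ b, a·f_a + (b−1)·f_b ≤ f_1 + 2·f_3 = 4/3. -/
import Mathlib


def f : ℕ → ℚ
  | 1 => 1
  | 2 => 13/42
  | 3 => 1/6
  | 4 => 2/21
  | 5 => 1/21
  | 6 => 1/84
  | _ => 0

lemma f_zero (n : ℕ) (h : 7 ≤ n) : f n = 0 := by
  match n, h with
  | (n+7), _ => rfl

lemma f_le (n : ℕ) : (n : ℚ) * f n ≤ 1 := by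
  by_cases h : n ≤ 6
  · interval_cases n <;> norm_num [f]
  · rw [f_zero n (by omega)]; norm_num

theorem stmt_4 (a b : ℕ) (ha : 1 ≤ a) (hab : a ≤ b) :
    (a : ℚ) * f a + ((b : ℚ) - 1) * f b ≤ f 1 + 2 * f 3 ∧ f 1 + 2 * f 3 = 4 / 3 := by
  refine ⟨?_, by norm_num [f]⟩
  by_cases hb : b ≤ 6
  · have ha6 : a ≤ 6 := le_trans hab hb
    interval_cases a <;> interval_cases b <;> norm_num [f]
  · rw [f_zero b (by omega)]
    have := f_le a
    have h13 : f 1 + 2 * f 3 = 4/3 := by norm_num [f]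
    rw [h13]
    linarith
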